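/- For a composition σ of n into k positive parts, the distinct cyclic rotations of σ give rise to exactly the k translations p ∈ Z/n (namely p = -S_i for the partial sums S_i, 0 ≤ i < k) such that T_p(σ(x)) is again of the form σ''(x) for a rotation σ'' of σ; equivalently, the set {p ∈ Z/n : σ(x) + p = ρ(σ)(x) for some rotation ρ} equals {-S_i mod n : 0 ≤ i < k} and has exactly k elements when the S_i are distinct mod n. -/

import Mathlib

def partialSum {k : ℕ} (σ : Fin k → ℕ) (b : Fin k) : ℕ :=
  ∑ j ∈ Finset.univ.filter (fun j : Fin k => j < b), σ j

/-- The `i`-th cyclic rotation of a `k`-tuple. -/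
def rotC {k : ℕ} [NeZero k] (i : Fin k) (σ : Fin k → ℕ) : Fin k → ℕ :=
  fun j => σ (j + i)

/-- Realization of a composition at a point of `ZMod n`, as a finite set. -/
def realizationF (n : ℕ) {k : ℕ} (σ : Fin k → ℕ) (x : ZMod n) : Finset (ZMod n) :=
  Finset.univ.image fun b : Fin k => x + (partialSum σ b : ℕ)

open scoped Classical

lemma partialSum_zero {k : ℕ} [NeZero k] (σ : Fin k → ℕ) : partialSum σ 0 = 0 := by
  simp [partialSum, Fin.lt_def]

lemma partialSum_succ {n k : ℕ} [NeZero n] [NeZero k] (σ : Fin k → ℕ)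
    (hsum : ∑ j, σ j = n) (c : Fin k) :
    ((partialSum σ (c + 1) : ℕ) : ZMod n) = (partialSum σ c : ℕ) + (σ c : ℕ) := by
  by_cases h : c.val + 1 < k
  · have h1 : (c + 1 : Fin k) = ⟨c.val + 1, h⟩ := by
      ext
      simp [Fin.add_def, Nat.mod_eq_of_lt h]
    have h2 : Finset.univ.filter (fun j : Fin k => j < (⟨c.val + 1, h⟩ : Fin k)) =
        insert c (Finset.univ.filter (fun j : Fin k => j < c)) := by
      ext j
      simp only [Finset.mem_filter, Finset.mem_univ, true_and, Finset.mem_insert, Fin.lt_def]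
      constructor
      · intro hj
        rcases Nat.lt_or_ge j.val c.val with h' | h'
        · exact Or.inr h'
        · exact Or.inl (Fin.ext (by omega))
      · rintro (rfl | hj) <;> omega
    rw [h1]
    unfold partialSum
    rw [h2, Finset.sum_insert (by simp)]
    push_cast
    ring
  · have hc : c.val + 1 = k := by have := c.isLt; omega
    have h1 : (c + 1 : Fin k) = 0 := by
      ext
      simp [Fin.add_def, hc]
    have h2 : Finset.univ.filter (fun j : Fin k => j < c) = Finset.univ.erase c := by
      ext j
      have := j.isLt
      simp only [Finset.mem_filter, Finset.mem_univ, true_and, Finset.mem_erase, and_true,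
        Fin.lt_def, ne_eq, Fin.ext_iff]
      omega
    have h3 : partialSum σ c + σ c = n := by
      rw [partialSum, h2, ← hsum]
      exact Finset.sum_erase_add _ _ (Finset.mem_univ c)
    rw [h1, partialSum_zero]
    have : ((partialSum σ c : ℕ) : ZMod n) + (σ c : ℕ) = ((partialSum σ c + σ c : ℕ) : ZMod n) := by
      push_cast; ring
    rw [this, h3]
    simp

lemma rotC_sum {n k : ℕ} [NeZero k] (σ : Fin k → ℕ) (hsum : ∑ j, σ j = n) (i : Fin k) :
    ∑ j, rotC i σ j = n := by
  rw [← hsum]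
  exact Fintype.sum_equiv (Equiv.addRight i) _ _ (fun j => rfl)

lemma partialSum_rot {n k : ℕ} [NeZero n] [NeZero k] (σ : Fin k → ℕ)
    (hsum : ∑ j, σ j = n) (i b : Fin k) :
    ((partialSum (rotC i σ) b : ℕ) : ZMod n)
      = ((partialSum σ (b + i) : ℕ) : ZMod n) - ((partialSum σ i : ℕ) : ZMod n) := by
  have hsum' : ∑ j, rotC i σ j = n := rotC_sum σ hsum i
  have H : ∀ t (ht : t < k), ((partialSum (rotC i σ) ⟨t, ht⟩ : ℕ) : ZMod n)
      = ((partialSum σ (⟨t, ht⟩ + i) : ℕ) : ZMod n) - ((partialSum σ i : ℕ) : ZMod n) := by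
    intro t
    induction t with
    | zero =>
        intro ht
        have h0 : (⟨0, ht⟩ : Fin k) = 0 := rfl
        rw [h0, partialSum_zero, zero_add]
        simp
    | succ t ih =>
        intro ht
        have ht' : t < k := Nat.lt_of_succ_lt ht
        have hb : (⟨t + 1, ht⟩ : Fin k) = ⟨t, ht'⟩ + 1 := by
          ext
          simp [Fin.add_def, Nat.mod_eq_of_lt ht]
        rw [hb, partialSum_succ (rotC i σ) hsum' ⟨t, ht'⟩]
        rw [ih ht']
        have hcomm : (⟨t, ht'⟩ + 1 : Fin k) + i = (⟨t, ht'⟩ + i) + 1 := add_right_comm _ _ _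
        rw [hcomm, partialSum_succ σ hsum (⟨t, ht'⟩ + i)]
        show ((partialSum σ (⟨t, ht'⟩ + i) : ℕ) : ZMod n) - _ + ((σ (⟨t, ht'⟩ + i) : ℕ) : ZMod n) = _
        ring
  have := H b.val b.isLt
  simpa using this

lemma realization_rot {n k : ℕ} [NeZero n] [NeZero k] (σ : Fin k → ℕ)
    (hsum : ∑ j, σ j = n) (x : ZMod n) (i : Fin k) :
    (realizationF n σ x).image (· + (-((partialSum σ i : ℕ) : ZMod n))) =
      realizationF n (rotC i σ) x := by
  unfold realizationF
  rw [Finset.image_image]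
  ext y
  simp only [Finset.mem_image, Finset.mem_univ, true_and, Function.comp]
  constructor
  · rintro ⟨b, rfl⟩
    refine ⟨b - i, ?_⟩
    rw [partialSum_rot σ hsum i (b - i), sub_add_cancel]
    ring
  · rintro ⟨b, rfl⟩
    refine ⟨b + i, ?_⟩
    rw [partialSum_rot σ hsum i b]
    ring

lemma partialSum_strictMono {k : ℕ} (σ : Fin k → ℕ) (hpos : ∀ j, 0 < σ j) :
    StrictMono (partialSum σ) := by
  intro a b hab
  apply Finset.sum_lt_sum_of_subset (i := a)
  · intro j hj
    simp only [Finset.mem_filter, Finset.mem_univ, true_and] at *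
    exact hj.trans hab
  · simp [hab]
  · simp
  · exact hpos a
  · intro j _ _
    exact Nat.zero_le _

lemma partialSum_lt {n k : ℕ} [NeZero k] (σ : Fin k → ℕ) (hpos : ∀ j, 0 < σ j)
    (hsum : ∑ j, σ j = n) (i : Fin k) : partialSum σ i < n := by
  rw [← hsum]
  unfold partialSum
  apply Finset.sum_lt_sum_of_subset (i := i) (Finset.filter_subset _ _)
  · exact Finset.mem_univ i
  · simp
  · exact hpos i
  · intro j _ _
    exact Nat.zero_le _

theorem translations_to_rotations (n k : ℕ) [NeZero n] [NeZero k]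
    (σ : Fin k → ℕ) (hpos : ∀ j, 0 < σ j) (hsum : ∑ j, σ j = n) (x : ZMod n) :
    (Finset.univ.filter fun p : ZMod n =>
        ∃ i : Fin k, (realizationF n σ x).image (· + p) = realizationF n (rotC i σ) x) =
      Finset.univ.image (fun i : Fin k => -((partialSum σ i : ℕ) : ZMod n)) ∧
    (Finset.univ.filter fun p : ZMod n =>
        ∃ i : Fin k, (realizationF n σ x).image (· + p) = realizationF n (rotC i σ) x).card
      = k := by
  have hinj : Function.Injective (fun i : Fin k => -((partialSum σ i : ℕ) : ZMod n)) := by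
    intro a b hab
    simp only [neg_inj] at hab
    have ha := partialSum_lt σ hpos hsum a
    have hb := partialSum_lt σ hpos hsum b
    have : partialSum σ a = partialSum σ b := by
      have := congrArg ZMod.val hab
      rwa [ZMod.val_cast_of_lt ha, ZMod.val_cast_of_lt hb] at this
    exact (partialSum_strictMono σ hpos).injective this
  have hset : (Finset.univ.filter fun p : ZMod n =>
        ∃ i : Fin k, (realizationF n σ x).image (· + p) = realizationF n (rotC i σ) x) =
      Finset.univ.image (fun i : Fin k => -((partialSum σ i : ℕ) : ZMod n)) := by
    ext p
    simp only [Finset.mem_filter, Finset.mem_univ, true_and, Finset.mem_image]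
    constructor
    · rintro ⟨i, hi⟩
      have hx : x ∈ realizationF n (rotC i σ) x := by
        simp only [realizationF, Finset.mem_image, Finset.mem_univ, true_and]
        exact ⟨0, by rw [partialSum_zero]; simp⟩
      rw [← hi] at hx
      simp only [Finset.mem_image, realizationF, Finset.mem_univ, true_and] at hx
      obtain ⟨y, hy, hxy⟩ := hx
      obtain ⟨b, rfl⟩ := hy
      refine ⟨b, ?_⟩
      have : x + (partialSum σ b : ℕ) + p = x := hxy
      linear_combination -this
    · rintro ⟨i, rfl⟩
      exact ⟨i, realization_rot σ hsum x i⟩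
  refine ⟨hset, ?_⟩
  rw [hset, Finset.card_image_of_injective _ hinj]
  simp
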